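/- Suppose S ⊆ A is a finite set and δ₀ > 0 form a Kazhdan pair, in the sense that for every complex Hilbert space K and every unital *-homomorphism ρ : A → B(K), if there exists a nonzero ξ ∈ K with ‖ρ(a)ξ − ε(a)ξ‖ < δ₀‖ξ‖ for all a ∈ S, then there exists a nonzero η ∈ K with ρ(a)η = ε(a)η for all a ∈ A. Then for every δ > 0 the following holds: for every complex Hilbert space H, every unital *-homomorphism π : A → B(H), and every nonzero ξ ∈ H satisfying ‖π(a)ξ − ε(a)ξ‖ < δ₀·δ·‖ξ‖ for all a ∈ S, there exists a vector η ∈ H with π(a)η = ε(a)η for all a ∈ A and ‖ξ − η‖ < δ‖ξ‖. -/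

import Mathlib

local notation "⟪" x ", " y "⟫" => @inner ℂ _ _ x y

universe u

set_option maxHeartbeats 1000000 in
theorem kazhdan_pair_with_continuity_constants
    {A : Type*} [NormedRing A] [StarRing A] [CStarRing A] [NormedAlgebra ℂ A]
    [CompleteSpace A] [StarModule ℂ A]
    (ε : A →⋆ₐ[ℂ] ℂ) (S : Finset A) (δ₀ : ℝ) (hδ₀ : 0 < δ₀)
    (hKazhdan : ∀ (K : Type u) [NormedAddCommGroup K] [InnerProductSpace ℂ K]
      [CompleteSpace K] (ρ : A →⋆ₐ[ℂ] (K →L[ℂ] K)),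
      (∃ ξ : K, ξ ≠ 0 ∧ ∀ a ∈ S, ‖ρ a ξ - ε a • ξ‖ < δ₀ * ‖ξ‖) →
      ∃ η : K, η ≠ 0 ∧ ∀ a : A, ρ a η = ε a • η)
    (δ : ℝ) (hδ : 0 < δ)
    (H : Type u) [NormedAddCommGroup H] [InnerProductSpace ℂ H] [CompleteSpace H]
    (π : A →⋆ₐ[ℂ] (H →L[ℂ] H))
    (ξ : H) (hξ : ξ ≠ 0)
    (hinv : ∀ a ∈ S, ‖π a ξ - ε a • ξ‖ < δ₀ * δ * ‖ξ‖) :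
    ∃ η : H, (∀ a : A, π a η = ε a • η) ∧ ‖ξ - η‖ < δ * ‖ξ‖ := by
  classical
  -- the space of invariant vectors
  set V : Submodule ℂ H := ⨅ a : A, LinearMap.ker ((π a - ε a • (1 : H →L[ℂ] H) : H →L[ℂ] H) : H →ₗ[ℂ] H) with hV
  have memV : ∀ x : H, x ∈ V ↔ ∀ a : A, π a x = ε a • x := by
    intro x
    simp [hV, Submodule.mem_iInf, LinearMap.mem_ker, ContinuousLinearMap.sub_apply,
      ContinuousLinearMap.smul_apply, ContinuousLinearMap.one_apply, sub_eq_zero]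
  have hVclosed : IsClosed (V : Set H) := by
    have : (V : Set H) = ⋂ a : A, (LinearMap.ker ((π a - ε a • (1 : H →L[ℂ] H) : H →L[ℂ] H) : H →ₗ[ℂ] H) : Set H) := by
      simp [hV, Submodule.coe_iInf]
    rw [this]
    exact isClosed_iInter fun a => ContinuousLinearMap.isClosed_ker (π a - ε a • (1 : H →L[ℂ] H))
  haveI : CompleteSpace V := hVclosed.completeSpace_coe
  -- adjoint facts
  have hadj : ∀ a : A, ContinuousLinearMap.adjoint (π a) = π (star a) := by
    intro a
    rw [← ContinuousLinearMap.star_eq_adjoint, ← map_star]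
  -- V⊥ is invariant
  have hinvperp : ∀ (a : A) (w : H), w ∈ Vᗮ → π a w ∈ Vᗮ := by
    intro a w hw
    rw [Submodule.mem_orthogonal]
    intro v hv
    have h1 : ⟪ContinuousLinearMap.adjoint (π a) v, w⟫ = ⟪v, π a w⟫ :=
      ContinuousLinearMap.adjoint_inner_left _ _ _
    rw [← h1, hadj, (memV v).mp hv (star a), inner_smul_left,
      (Submodule.mem_orthogonal V w).mp hw v hv, mul_zero]
  -- restriction of π to V⊥
  let f : A → (Vᗮ →L[ℂ] Vᗮ) := fun a =>
    ((π a).comp Vᗮ.subtypeL).codRestrict Vᗮ (fun x => hinvperp a x x.2)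
  have hf : ∀ (a : A) (x : Vᗮ), ((f a x : H)) = π a (x : H) := fun a x => rfl
  have hext : ∀ (g h : Vᗮ →L[ℂ] Vᗮ), (∀ x : Vᗮ, ((g x : H)) = ((h x : H))) → g = h := by
    intro g h hgh
    ext x
    exact hgh x
  let ρ : A →⋆ₐ[ℂ] (Vᗮ →L[ℂ] Vᗮ) :=
    { toFun := f
      map_one' := hext _ _ fun x => by simp [hf, map_one]
      map_mul' := fun a b => hext _ _ fun x => by
        simp only [hf, map_mul, ContinuousLinearMap.mul_apply, ContinuousLinearMap.coe_comp',
          Function.comp_apply]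
      map_zero' := hext _ _ fun x => by simp [hf, map_zero]
      map_add' := fun a b => hext _ _ fun x => by
        simp [hf, map_add, ContinuousLinearMap.add_apply]
      commutes' := fun c => hext _ _ fun x => by
        simp only [hf]
        rw [AlgHomClass.commutes]
        simp [Algebra.algebraMap_eq_smul_one]
      map_star' := fun a => by
        rw [ContinuousLinearMap.star_eq_adjoint, ContinuousLinearMap.eq_adjoint_iff]
        intro x y
        rw [Submodule.coe_inner, Submodule.coe_inner, hf, hf, ← hadj,
          ContinuousLinearMap.adjoint_inner_left] }
  -- decompose ξ
  set η : H := (V.orthogonalProjection ξ : H) with hη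
  have hηV : η ∈ V := (V.orthogonalProjection ξ).2
  have hperp : ξ - η ∈ Vᗮ := Submodule.sub_starProjection_mem_orthogonal (K := V) ξ
  refine ⟨η, fun a => (memV η).mp hηV a, ?_⟩
  by_contra hcon
  push_neg at hcon
  have hξpos : 0 < δ * ‖ξ‖ := mul_pos hδ (norm_pos_iff.mpr hξ)
  have hξ'ne : ξ - η ≠ 0 := by
    intro h0
    rw [h0, norm_zero] at hcon
    exact absurd hcon (not_le.mpr hξpos)
  -- apply Kazhdan on V⊥
  have hKin : ∃ ζ : ↥Vᗮ, ζ ≠ 0 ∧ ∀ a ∈ S, ‖ρ a ζ - ε a • ζ‖ < δ₀ * ‖ζ‖ := by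
    refine ⟨⟨ξ - η, hperp⟩, fun h0 => hξ'ne (congrArg Subtype.val h0), ?_⟩
    intro a ha
    have key : (π a (ξ - η) - ε a • (ξ - η)) = π a ξ - ε a • ξ := by
      rw [map_sub, (memV η).mp hηV a, smul_sub]
      abel
    have hnorm : ‖f a ⟨ξ - η, hperp⟩ - ε a • (⟨ξ - η, hperp⟩ : Vᗮ)‖
        = ‖π a ξ - ε a • ξ‖ := by
      rw [← key]
      rfl
    show ‖f a ⟨ξ - η, hperp⟩ - ε a • (⟨ξ - η, hperp⟩ : Vᗮ)‖ < δ₀ * ‖(⟨ξ - η, hperp⟩ : Vᗮ)‖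
    rw [hnorm]
    calc ‖π a ξ - ε a • ξ‖ < δ₀ * δ * ‖ξ‖ := hinv a ha
      _ = δ₀ * (δ * ‖ξ‖) := by ring
      _ ≤ δ₀ * ‖ξ - η‖ := by
          apply mul_le_mul_of_nonneg_left hcon (le_of_lt hδ₀)
      _ = δ₀ * ‖(⟨ξ - η, hperp⟩ : Vᗮ)‖ := rfl
  obtain ⟨η', hη'ne, hη'inv⟩ := hKazhdan (↥Vᗮ) ρ hKin
  have hη'V : (η' : H) ∈ V := by
    rw [memV]
    intro a
    have h2 := congrArg (Subtype.val) (hη'inv a)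
    exact h2
  have h0 : (η' : H) = 0 := by
    have := (Submodule.mem_orthogonal V (η' : H)).mp η'.2 (η' : H) hη'V
    simpa using this
  exact hη'ne (Subtype.ext h0)
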